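/- Let f, h : ℝ^d → ℝ be twice continuously differentiable and satisfy δ-Hessian similarity, let K ≥ 1 be an integer, and let 0 < η satisfy η ≤ 1/(5δK) (no constraint on η when δ = 0). Let x, y, m ∈ ℝ^d and set e = m − ∇f(x) + ∇h(x). Let (Ω, μ) be a probability space and ξ : Ω → ℝ^d Bochner integrable with ∫ ξ dμ = 0 and ∫ ‖ξ‖² dμ ≤ σ_h². Then ∫ ‖y − η(∇h(y) + m + ξ(ω)) − x‖² dμ(ω) ≤ (1 + 1/K)‖y − x‖² + 12Kη²‖e‖² + 6Kη²‖∇f(y)‖² + η²σ_h². -/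

import Mathlib

set_option maxHeartbeats 1000000

open MeasureTheory

private lemma grad_lip' {d : ℕ} (f h : EuclideanSpace ℝ (Fin d) → ℝ) (δ : ℝ)
    (hf : ContDiff ℝ 2 f) (hh : ContDiff ℝ 2 h)
    (hsim : ∀ x, ‖iteratedFDeriv ℝ 2 f x - iteratedFDeriv ℝ 2 h x‖ ≤ δ)
    (x y : EuclideanSpace ℝ (Fin d)) :
    ‖(gradient f y - gradient h y) - (gradient f x - gradient h x)‖ ≤ δ * ‖y - x‖ := by
  have hg : ContDiff ℝ 2 (fun z => f z - h z) := hf.sub hh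
  have hsub : ∀ z, iteratedFDeriv ℝ 2 (fun z => f z - h z) z
      = iteratedFDeriv ℝ 2 f z - iteratedFDeriv ℝ 2 h z := by
    intro z
    have h2 : iteratedFDeriv ℝ 2 (fun w => f w + (-h) w) z
        = iteratedFDeriv ℝ 2 f z + iteratedFDeriv ℝ 2 (-h) z :=
      iteratedFDeriv_add_apply' hf.contDiffAt hh.neg.contDiffAt
    rw [show (fun z => f z - h z) = (fun w => f w + (-h) w) from
      funext fun t => by simp [sub_eq_add_neg], h2, iteratedFDeriv_neg_apply, sub_eq_add_neg]
  have hGdiff : ContDiff ℝ 1 (iteratedFDeriv ℝ 1 (fun z => f z - h z)) :=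
    hg.iteratedFDeriv_right (by norm_num)
  have hGbound : ∀ z, ‖fderiv ℝ (iteratedFDeriv ℝ 1 (fun z => f z - h z)) z‖ ≤ δ := by
    intro z
    rw [norm_fderiv_iteratedFDeriv, hsub z]
    exact hsim z
  have hGlip : ‖iteratedFDeriv ℝ 1 (fun z => f z - h z) y
      - iteratedFDeriv ℝ 1 (fun z => f z - h z) x‖ ≤ δ * ‖y - x‖ :=
    Convex.norm_image_sub_le_of_norm_fderiv_le
      (fun z _ => (hGdiff.differentiable (by norm_num)).differentiableAt)
      (fun z _ => hGbound z) convex_univ (Set.mem_univ x) (Set.mem_univ y)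
  have hGf : ∀ z, iteratedFDeriv ℝ 1 (fun z => f z - h z) z
      = (continuousMultilinearCurryFin1 ℝ (EuclideanSpace ℝ (Fin d)) ℝ).symm
        (fderiv ℝ (fun z => f z - h z) z) := by
    intro z
    ext v
    simp [iteratedFDeriv_one_apply]
  have hfderlip : ‖fderiv ℝ (fun z => f z - h z) y - fderiv ℝ (fun z => f z - h z) x‖
      ≤ δ * ‖y - x‖ := by
    have h2 : iteratedFDeriv ℝ 1 (fun z => f z - h z) y
        - iteratedFDeriv ℝ 1 (fun z => f z - h z) x
        = (continuousMultilinearCurryFin1 ℝ (EuclideanSpace ℝ (Fin d)) ℝ).symm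
          (fderiv ℝ (fun z => f z - h z) y - fderiv ℝ (fun z => f z - h z) x) := by
      rw [hGf, hGf, ← LinearIsometryEquiv.map_sub]
    rw [h2, LinearIsometryEquiv.norm_map] at hGlip
    exact hGlip
  have hfd : ∀ z, fderiv ℝ (fun z => f z - h z) z = fderiv ℝ f z - fderiv ℝ h z := fun z =>
    fderiv_sub ((hf.differentiable (by norm_num)).differentiableAt)
      ((hh.differentiable (by norm_num)).differentiableAt)
  have h3 : (gradient f y - gradient h y) - (gradient f x - gradient h x)
      = (InnerProductSpace.toDual ℝ (EuclideanSpace ℝ (Fin d))).symm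
        (fderiv ℝ (fun z => f z - h z) y - fderiv ℝ (fun z => f z - h z) x) := by
    rw [hfd, hfd]
    simp [gradient, map_sub]
  rw [h3, LinearIsometryEquiv.norm_map]
  exact hfderlip

private lemma expand_step' {d : ℕ} (a : EuclideanSpace ℝ (Fin d)) (η : ℝ) (hη0 : 0 < η)
    {Ω : Type*} [MeasurableSpace Ω] (μ : Measure Ω) [IsProbabilityMeasure μ]
    (ξ : Ω → EuclideanSpace ℝ (Fin d)) (hint : Integrable ξ μ)
    (hmean : ∫ ω, ξ ω ∂μ = 0) :
    ∫ ω, ‖a - η • ξ ω‖ ^ 2 ∂μ ≤ ‖a‖ ^ 2 + η ^ 2 * ∫ ω, ‖ξ ω‖ ^ 2 ∂μ := by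
  have hptw : ∀ ω, ‖a - η • ξ ω‖ ^ 2
      = ‖a‖ ^ 2 - 2 * η * (inner ℝ a (ξ ω) : ℝ) + η ^ 2 * ‖ξ ω‖ ^ 2 := by
    intro ω
    rw [norm_sub_sq_real, real_inner_smul_right, norm_smul]
    rw [Real.norm_eq_abs, abs_of_pos hη0]
    ring
  have hinner : Integrable (fun ω => (inner ℝ a (ξ ω) : ℝ)) μ :=
    (innerSL ℝ a).integrable_comp hint
  have hintinner : ∫ ω, (inner ℝ a (ξ ω) : ℝ) ∂μ = 0 := by
    rw [integral_inner hint a, hmean, inner_zero_right]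
  by_cases hsq : Integrable (fun ω => ‖ξ ω‖ ^ 2) μ
  · have h1 : Integrable (fun ω => ‖a‖ ^ 2 - 2 * η * (inner ℝ a (ξ ω) : ℝ)) μ :=
      (integrable_const _).sub (hinner.const_mul _)
    refine le_of_eq ?_
    calc ∫ ω, ‖a - η • ξ ω‖ ^ 2 ∂μ
        = ∫ ω, (‖a‖ ^ 2 - 2 * η * (inner ℝ a (ξ ω) : ℝ) + η ^ 2 * ‖ξ ω‖ ^ 2) ∂μ := by
          exact integral_congr_ae (Filter.Eventually.of_forall hptw)
      _ = (∫ ω, (‖a‖ ^ 2 - 2 * η * (inner ℝ a (ξ ω) : ℝ)) ∂μ)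
          + ∫ ω, η ^ 2 * ‖ξ ω‖ ^ 2 ∂μ := integral_add h1 (hsq.const_mul _)
      _ = ‖a‖ ^ 2 - 2 * η * (∫ ω, (inner ℝ a (ξ ω) : ℝ) ∂μ)
          + η ^ 2 * ∫ ω, ‖ξ ω‖ ^ 2 ∂μ := by
          rw [integral_sub (integrable_const _) (hinner.const_mul _), integral_const,
            integral_const_mul, integral_const_mul]
          simp
      _ = ‖a‖ ^ 2 + η ^ 2 * ∫ ω, ‖ξ ω‖ ^ 2 ∂μ := by rw [hintinner]; ring
  · have hni : ¬ Integrable (fun ω => ‖a - η • ξ ω‖ ^ 2) μ := by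
      intro hcon
      apply hsq
      have h2 : Integrable (fun ω => ‖a - η • ξ ω‖ ^ 2
          - (‖a‖ ^ 2 - 2 * η * (inner ℝ a (ξ ω) : ℝ))) μ :=
        hcon.sub ((integrable_const _).sub (hinner.const_mul _))
      have h3 : Integrable (fun ω => (η ^ 2)⁻¹ * (‖a - η • ξ ω‖ ^ 2
          - (‖a‖ ^ 2 - 2 * η * (inner ℝ a (ξ ω) : ℝ)))) μ := h2.const_mul _
      have h4 : (fun ω => (η ^ 2)⁻¹ * (‖a - η • ξ ω‖ ^ 2
          - (‖a‖ ^ 2 - 2 * η * (inner ℝ a (ξ ω) : ℝ)))) = fun ω => ‖ξ ω‖ ^ 2 := by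
        funext ω
        rw [hptw ω]
        field_simp
        ring
      rwa [h4] at h3
    rw [integral_undef hni]
    have h5 : 0 ≤ ∫ ω, ‖ξ ω‖ ^ 2 ∂μ :=
      integral_nonneg fun ω => by positivity
    nlinarith [sq_nonneg ‖a‖, sq_nonneg η]

private lemma step_alg (Kr η δ r U P A En G : ℝ) (hKr : 1 ≤ Kr) (hη0 : 0 < η) (hδ : 0 ≤ δ)
    (hr0 : 0 ≤ r) (hU0 : 0 ≤ U) (hP0 : 0 ≤ P) (hA0 : 0 ≤ A) (hE0 : 0 ≤ En) (hG0 : 0 ≤ G)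
    (ha : A ≤ U + η * P) (hU : U ≤ (1 + η * δ) * r) (hc5 : η * δ * (5 * Kr) ≤ 1)
    (hP : P ≤ En + G) :
    A ^ 2 ≤ (1 + 1 / Kr) * r ^ 2 + 12 * Kr * η ^ 2 * En ^ 2 + 6 * Kr * η ^ 2 * G ^ 2 := by
  have hKr0 : 0 < Kr := lt_of_lt_of_le one_pos hKr
  set z : ℝ := 1 / Kr with hzdef
  have e1 : Kr * z = 1 := mul_one_div_cancel hKr0.ne'
  have hz0 : 0 < z := by positivity
  have hz1 : z ≤ 1 := by rw [hzdef, div_le_one hKr0]; exact hKr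
  set t : ℝ := η * P with htdef
  have ht0 : 0 ≤ t := by positivity
  have k1 : A ^ 2 ≤ (U + t) ^ 2 := by nlinarith
  have k2 : (U + t) ^ 2 ≤ (1 + z / 3) * U ^ 2 + (1 + 3 * Kr) * t ^ 2 := by
    have key : (1 + z / 3) * U ^ 2 + (1 + 3 * Kr) * t ^ 2 - (U + t) ^ 2
        = (z / 3) * (U - 3 * Kr * t) ^ 2 := by
      linear_combination (2 * U * t - 3 * Kr * t ^ 2) * e1
    nlinarith [sq_nonneg (U - 3 * Kr * t), hz0.le]
  have hc : η * δ ≤ z / 5 := by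
    calc η * δ = η * δ * (Kr * z) := by rw [e1]; ring
      _ = η * δ * (5 * Kr) * (z / 5) := by ring
      _ ≤ 1 * (z / 5) := mul_le_mul_of_nonneg_right hc5 (by positivity)
      _ = z / 5 := by ring
  have k3 : U ^ 2 ≤ ((1 + z / 5) * r) ^ 2 := by
    have h1 : U ≤ (1 + z / 5) * r := hU.trans (by nlinarith)
    nlinarith
  have poly : (1 + z / 3) * (1 + z / 5) ^ 2 ≤ 1 + z := by
    nlinarith [mul_nonneg (mul_nonneg hz0.le hz0.le) (sub_nonneg.2 hz1),
      mul_nonneg hz0.le (sub_nonneg.2 hz1)]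
  have k4 : (1 + z / 3) * ((1 + z / 5) * r) ^ 2 ≤ (1 + z) * r ^ 2 := by
    calc (1 + z / 3) * ((1 + z / 5) * r) ^ 2
        = ((1 + z / 3) * (1 + z / 5) ^ 2) * r ^ 2 := by ring
      _ ≤ (1 + z) * r ^ 2 := mul_le_mul_of_nonneg_right poly (sq_nonneg r)
  have k6 : (1 + z / 3) * U ^ 2 ≤ (1 + z) * r ^ 2 :=
    le_trans (mul_le_mul_of_nonneg_left k3 (by positivity)) k4
  have k5 : (1 + 3 * Kr) * t ^ 2 ≤ 12 * Kr * η ^ 2 * En ^ 2 + 6 * Kr * η ^ 2 * G ^ 2 := by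
    have hPP : P ^ 2 ≤ 3 * En ^ 2 + (3 / 2) * G ^ 2 := by
      nlinarith [sq_nonneg (2 * En - G)]
    calc (1 + 3 * Kr) * t ^ 2 ≤ (4 * Kr) * t ^ 2 :=
          mul_le_mul_of_nonneg_right (by linarith) (sq_nonneg t)
      _ = (4 * Kr * η ^ 2) * P ^ 2 := by rw [htdef]; ring
      _ ≤ (4 * Kr * η ^ 2) * (3 * En ^ 2 + (3 / 2) * G ^ 2) :=
          mul_le_mul_of_nonneg_left hPP (by positivity)
      _ = 12 * Kr * η ^ 2 * En ^ 2 + 6 * Kr * η ^ 2 * G ^ 2 := by ring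
  calc A ^ 2 ≤ (U + t) ^ 2 := k1
    _ ≤ (1 + z / 3) * U ^ 2 + (1 + 3 * Kr) * t ^ 2 := k2
    _ ≤ (1 + z) * r ^ 2 + (12 * Kr * η ^ 2 * En ^ 2 + 6 * Kr * η ^ 2 * G ^ 2) :=
        add_le_add k6 k5
    _ = (1 + 1 / Kr) * r ^ 2 + 12 * Kr * η ^ 2 * En ^ 2 + 6 * Kr * η ^ 2 * G ^ 2 := by
        rw [hzdef]; ring

/-- bound on the squared distance to the snapshot `x` after one
noisy bias-corrected local step. The step-size constraint `η ≤ 1/(5δK)` is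
encoded as `η * (5δK) ≤ 1`, which is vacuous when `δ = 0`. -/
theorem stmt_6 {d : ℕ} (f h : EuclideanSpace ℝ (Fin d) → ℝ) (δ : ℝ)
    (hf : ContDiff ℝ 2 f) (hh : ContDiff ℝ 2 h)
    (hsim : ∀ x, ‖iteratedFDeriv ℝ 2 f x - iteratedFDeriv ℝ 2 h x‖ ≤ δ)
    (K : ℕ) (hK : 1 ≤ K)
    (η : ℝ) (hη0 : 0 < η) (hη : η * (5 * δ * K) ≤ 1)
    (x y m : EuclideanSpace ℝ (Fin d))
    (e : EuclideanSpace ℝ (Fin d)) (he : e = m - gradient f x + gradient h x)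
    (σh : ℝ)
    {Ω : Type*} [MeasurableSpace Ω] (μ : Measure Ω) [IsProbabilityMeasure μ]
    (ξ : Ω → EuclideanSpace ℝ (Fin d)) (hint : Integrable ξ μ)
    (hmean : ∫ ω, ξ ω ∂μ = 0) (hvar : ∫ ω, ‖ξ ω‖ ^ 2 ∂μ ≤ σh ^ 2) :
    ∫ ω, ‖y - η • (gradient h y + m + ξ ω) - x‖ ^ 2 ∂μ
      ≤ (1 + 1 / K) * ‖y - x‖ ^ 2 + 12 * K * η ^ 2 * ‖e‖ ^ 2
        + 6 * K * η ^ 2 * ‖gradient f y‖ ^ 2 + η ^ 2 * σh ^ 2 := by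
  have hδ : 0 ≤ δ := le_trans (norm_nonneg _) (hsim x)
  have hKr : (1 : ℝ) ≤ (K : ℝ) := by exact_mod_cast hK
  obtain ⟨w, hwdef⟩ : ∃ w : EuclideanSpace ℝ (Fin d),
      w = (gradient h y - gradient h x) - (gradient f y - gradient f x) := ⟨_, rfl⟩
  have hw : ‖w‖ ≤ δ * ‖y - x‖ := by
    have h1 := grad_lip' f h δ hf hh hsim x y
    have h2 : w = -((gradient f y - gradient h y) - (gradient f x - gradient h x)) := by
      rw [hwdef]; abel
    rw [h2, norm_neg]
    exact h1
  obtain ⟨a, hadef⟩ : ∃ a : EuclideanSpace ℝ (Fin d),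
      a = y - η • (gradient h y + m) - x := ⟨_, rfl⟩
  have hdecomp : a = ((y - x) - η • w) - η • (e + gradient f y) := by
    rw [hadef, hwdef, he]
    module
  have ha : ‖a‖ ≤ ‖(y - x) - η • w‖ + η * ‖e + gradient f y‖ := by
    rw [hdecomp]
    refine (norm_sub_le _ _).trans ?_
    rw [norm_smul, Real.norm_eq_abs, abs_of_pos hη0]
  have hU : ‖(y - x) - η • w‖ ≤ (1 + η * δ) * ‖y - x‖ := by
    refine (norm_sub_le _ _).trans ?_
    rw [norm_smul, Real.norm_eq_abs, abs_of_pos hη0]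
    nlinarith [hw, hη0.le]
  have hc5 : η * δ * (5 * (K : ℝ)) ≤ 1 := by
    calc η * δ * (5 * (K : ℝ)) = η * (5 * δ * (K : ℝ)) := by ring
      _ ≤ 1 := hη
  have hdet : ‖a‖ ^ 2 ≤ (1 + 1 / (K : ℝ)) * ‖y - x‖ ^ 2
      + 12 * (K : ℝ) * η ^ 2 * ‖e‖ ^ 2 + 6 * (K : ℝ) * η ^ 2 * ‖gradient f y‖ ^ 2 :=
    step_alg (K : ℝ) η δ ‖y - x‖ ‖(y - x) - η • w‖ ‖e + gradient f y‖ ‖a‖ ‖e‖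
      ‖gradient f y‖ hKr hη0 hδ (norm_nonneg _) (norm_nonneg _) (norm_nonneg _)
      (norm_nonneg _) (norm_nonneg _) (norm_nonneg _) ha hU hc5 (norm_add_le _ _)
  have hvec : ∀ ω, y - η • (gradient h y + m + ξ ω) - x = a - η • ξ ω := by
    intro ω
    rw [hadef]
    module
  calc ∫ ω, ‖y - η • (gradient h y + m + ξ ω) - x‖ ^ 2 ∂μ
      = ∫ ω, ‖a - η • ξ ω‖ ^ 2 ∂μ :=
        integral_congr_ae (Filter.Eventually.of_forall fun ω => by show ‖y - η • (gradient h y + m + ξ ω) - x‖ ^ 2 = ‖a - η • ξ ω‖ ^ 2; rw [hvec ω])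
    _ ≤ ‖a‖ ^ 2 + η ^ 2 * ∫ ω, ‖ξ ω‖ ^ 2 ∂μ := expand_step' a η hη0 μ ξ hint hmean
    _ ≤ (1 + 1 / K) * ‖y - x‖ ^ 2 + 12 * K * η ^ 2 * ‖e‖ ^ 2
        + 6 * K * η ^ 2 * ‖gradient f y‖ ^ 2 + η ^ 2 * σh ^ 2 := by
        have h11 : η ^ 2 * ∫ ω, ‖ξ ω‖ ^ 2 ∂μ ≤ η ^ 2 * σh ^ 2 :=
          mul_le_mul_of_nonneg_left hvar (sq_nonneg η)
        linarith [hdet]
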